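/- arXiv:2509.15013 — 2 statements merged into one kernel-verified Lean document; each statement's English description precedes it below -/
import Mathlib

section
/- Let H be the parity-check matrix of an (m, n, a=1, b=1, h) grid code over a finite field F_q (with arbitrary global parity rows), and let E ⊆ [m]×[n] be a pattern with rank(H|_E) = |E|. Then there exists a subset E' ⊆ E with |E'| ≥ |E| − h such that E' is acyclic. -/
open Finset

/-- A subset of `[m] × [n]`, viewed as the edge set of a bipartite graph with left
vertex set `Fin m` and right vertex set `Fin n`, is a *simple cycle* (of length `2k`,
`k ≥ 2`) if it has the form
`{(i₁,j₁),(i₂,j₁),(i₂,j₂),(i₃,j₂),…,(i_k,j_k),(i₁,j_k)}`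
for pairwise distinct `i₁,…,i_k` and pairwise distinct `j₁,…,j_k`. -/
def IsSimpleCycle {m n : ℕ} (C : Finset (Fin m × Fin n)) : Prop :=
  ∃ k : ℕ, 2 ≤ k ∧ ∃ (I : ℕ → Fin m) (J : ℕ → Fin n),
    Set.InjOn I (Set.Iio k) ∧ Set.InjOn J (Set.Iio k) ∧
    C = ((Finset.range k).image fun ℓ => (I ℓ, J ℓ)) ∪
        ((Finset.range k).image fun ℓ => (I ((ℓ + 1) % k), J ℓ))

/-- An edge set is *acyclic* if it contains no simple cycle. -/
def IsAcyclicEdges {m n : ℕ} (E : Finset (Fin m × Fin n)) : Prop :=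
  ∀ C ⊆ E, ¬ IsSimpleCycle C

/-- The parity-check matrix of an `(m, n, a = 1, b = 1, h)` grid code over `F` with
global parity-check vectors `c`.  Rows are indexed by `Fin m ⊕ (Fin (n-1) ⊕ Fin h)`
(the `m` row checks, the first `n - 1` column checks, and the `h` global checks) and
columns by `Fin m × Fin n`. -/
def gridH (F : Type*) [Field F] (m n h : ℕ) (c : Fin m × Fin n → Fin h → F) :
    Matrix (Fin m ⊕ (Fin (n - 1) ⊕ Fin h)) (Fin m × Fin n) F :=
  Matrix.of fun r ij =>
    Sum.elim (fun i => if ij.1 = i then (1 : F) else 0)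
      (Sum.elim (fun j : Fin (n - 1) => if (ij.2 : ℕ) = (j : ℕ) then (1 : F) else 0)
        (fun k => c ij k)) r

/-- The grid code with global parity checks `c` is *maximally recoverable* (MR) if the
columns of its parity-check matrix indexed by `E` are linearly independent for every
pattern `E` which is the union of an acyclic edge set and at most `h` further edges. -/
def IsMR (F : Type*) [Field F] (m n h : ℕ) (c : Fin m × Fin n → Fin h → F) : Prop :=
  ∀ E : Finset (Fin m × Fin n),
    (∃ E' F' : Finset (Fin m × Fin n),
        IsAcyclicEdges E' ∧ F'.card ≤ h ∧ E = E' ∪ F') →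
    ((gridH F m n h c).submatrix id (fun e : E => (e : Fin m × Fin n))).rank = E.card

/-- A *spanning tree* of the complete bipartite graph on `[m] ⊔ [n]`: an acyclic edge
set with `m + n - 1` edges. -/
def IsSpanningTree {m n : ℕ} (T : Finset (Fin m × Fin n)) : Prop :=
  IsAcyclicEdges T ∧ T.card = m + n - 1

/-- `IsCycleSumOf c C s` says `C` is a simple cycle
`{(i₁,j₁),(i₂,j₁),…,(i_k,j_k),(i₁,j_k)}` and
`s = Σ_{ℓ=1}^{k} (c^{i_ℓ,j_ℓ} − c^{i_{ℓ+1},j_ℓ})` (with `i_{k+1} := i₁`) is the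
corresponding cycle sum `Σ_H(C) ∈ F^h`. -/
def IsCycleSumOf {F : Type*} [Field F] {m n h : ℕ} (c : Fin m × Fin n → Fin h → F)
    (C : Finset (Fin m × Fin n)) (s : Fin h → F) : Prop :=
  ∃ k : ℕ, 2 ≤ k ∧ ∃ (I : ℕ → Fin m) (J : ℕ → Fin n),
    Set.InjOn I (Set.Iio k) ∧ Set.InjOn J (Set.Iio k) ∧
    C = ((Finset.range k).image fun ℓ => (I ℓ, J ℓ)) ∪
        ((Finset.range k).image fun ℓ => (I ((ℓ + 1) % k), J ℓ)) ∧
    s = ∑ ℓ ∈ Finset.range k, (c (I ℓ, J ℓ) - c (I ((ℓ + 1) % k), J ℓ))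

/-- `IsGammaCycleSumOf γ C g` says `C` is a simple cycle and
`g = γ(C) = Σ_{ℓ=1}^{k} (γ(i_ℓ,j_ℓ) − γ(i_{ℓ+1},j_ℓ))`. -/
def IsGammaCycleSumOf {F : Type*} [Field F] {m n : ℕ} (γ : Fin m × Fin n → F)
    (C : Finset (Fin m × Fin n)) (g : F) : Prop :=
  ∃ k : ℕ, 2 ≤ k ∧ ∃ (I : ℕ → Fin m) (J : ℕ → Fin n),
    Set.InjOn I (Set.Iio k) ∧ Set.InjOn J (Set.Iio k) ∧
    C = ((Finset.range k).image fun ℓ => (I ℓ, J ℓ)) ∪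
        ((Finset.range k).image fun ℓ => (I ((ℓ + 1) % k), J ℓ)) ∧
    g = ∑ ℓ ∈ Finset.range k, (γ (I ℓ, J ℓ) - γ (I ((ℓ + 1) % k), J ℓ))


/-- Top part of a grid-code column. -/
def tcol (F : Type*) [Field F] (m n : ℕ) (e : Fin m × Fin n) : Fin m ⊕ Fin (n - 1) → F :=
  Sum.elim (fun i => if e.1 = i then (1 : F) else 0)
    (fun j : Fin (n - 1) => if (e.2 : ℕ) = (j : ℕ) then (1 : F) else 0)

lemma tcol_injective (F : Type*) [Field F] (m n : ℕ) :
    Function.Injective (tcol F m n) := by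
  rintro ⟨i, j⟩ ⟨i', j'⟩ hseq
  have hi : i = i' := by
    have h1 := congrFun hseq (Sum.inl i)
    simp only [tcol, Sum.elim_inl] at h1
    by_contra hne
    rw [if_true, if_neg (fun h : i' = i => hne h.symm)] at h1
    exact one_ne_zero h1
  have hj : (j : ℕ) = (j' : ℕ) := by
    rcases lt_or_ge (j : ℕ) (n - 1) with hlt | hge
    · have h1 := congrFun hseq (Sum.inr ⟨(j : ℕ), hlt⟩)
      simp only [tcol, Sum.elim_inr] at h1
      by_contra hne
      rw [if_true, if_neg (fun h : (j' : ℕ) = (j : ℕ) => hne h.symm)] at h1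
      exact one_ne_zero h1
    · rcases lt_or_ge (j' : ℕ) (n - 1) with hlt' | hge'
      · have h1 := congrFun hseq (Sum.inr ⟨(j' : ℕ), hlt'⟩)
        simp only [tcol, Sum.elim_inr] at h1
        rw [if_true, if_neg (by omega : ¬ (j : ℕ) = (j' : ℕ))] at h1
        exact absurd h1.symm one_ne_zero
      · have := j.isLt; have := j'.isLt; omega
  exact Prod.ext hi (Fin.ext hj)

lemma sum_rot {M : Type*} [AddCommMonoid M] (k : ℕ) (hk : 0 < k) (g : ℕ → M) :
    ∑ ℓ ∈ Finset.range k, g ((ℓ + 1) % k) = ∑ ℓ ∈ Finset.range k, g ℓ := by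
  refine Finset.sum_nbij' (fun ℓ => (ℓ + 1) % k) (fun ℓ => (ℓ + (k - 1)) % k)
    (fun a ha => Finset.mem_range.mpr (Nat.mod_lt _ hk))
    (fun a ha => Finset.mem_range.mpr (Nat.mod_lt _ hk)) ?_ ?_ (fun a ha => rfl)
  · intro a ha
    have ha' := Finset.mem_range.mp ha
    show ((a + 1) % k + (k - 1)) % k = a
    rw [Nat.mod_add_mod, (by omega : a + 1 + (k - 1) = a + k), Nat.add_mod_right,
      Nat.mod_eq_of_lt ha']
  · intro a ha
    have ha' := Finset.mem_range.mp ha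
    show ((a + (k - 1)) % k + 1) % k = a
    rw [Nat.mod_add_mod, (by omega : a + (k - 1) + 1 = a + k), Nat.add_mod_right,
      Nat.mod_eq_of_lt ha']

lemma tcol_cycle_sum (F : Type*) [Field F] (m n k : ℕ) (hk : 0 < k)
    (I : ℕ → Fin m) (J : ℕ → Fin n) :
    ∑ ℓ ∈ Finset.range k, (tcol F m n (I ℓ, J ℓ) - tcol F m n (I ((ℓ + 1) % k), J ℓ)) = 0 := by
  funext r
  rw [Finset.sum_apply]
  rcases r with i0 | j0
  · simp only [Pi.sub_apply, tcol, Sum.elim_inl]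
    rw [Finset.sum_sub_distrib,
      sum_rot k hk (fun a => if I a = i0 then (1 : F) else 0), sub_self]
    rfl
  · simp only [Pi.sub_apply, tcol, Sum.elim_inr, sub_self, Finset.sum_const_zero]
    rfl

/-- Holzbaur et al., "only if" direction of Theorem 2.1.  Let `H` be
the parity-check matrix of an `(m, n, a=1, b=1, h)` grid code with arbitrary global
parity rows `c`, and let `E` be a pattern with `rank H|_E = |E|`.  Then there is
`E' ⊆ E` with `|E'| ≥ |E| - h` such that `E'` is acyclic. -/
theorem statement15 (m n h : ℕ) (hm : 2 ≤ m) (hn : 2 ≤ n) (hh : 1 ≤ h)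
    (F : Type*) [Field F] [Fintype F] (c : Fin m × Fin n → Fin h → F)
    (E : Finset (Fin m × Fin n))
    (hE : ((gridH F m n h c).submatrix id
      (fun e : E => (e : Fin m × Fin n))).rank = E.card) :
    ∃ E' ⊆ E, E.card - h ≤ E'.card ∧ IsAcyclicEdges E' := by
  classical
  set A := (gridH F m n h c).submatrix id (fun e : E => (e : Fin m × Fin n)) with hAdef
  -- Step 1: the columns of A are linearly independent (mulVecLin injective)
  have hrange : Module.finrank F (LinearMap.range A.mulVecLin) = E.card := hE
  have hrn := LinearMap.finrank_range_add_finrank_ker A.mulVecLin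
  rw [Module.finrank_fintype_fun_eq_card, Fintype.card_coe, hrange] at hrn
  have hker0 : Module.finrank F (LinearMap.ker A.mulVecLin) = 0 := by omega
  have hinj : Function.Injective A.mulVecLin := by
    rw [← LinearMap.ker_eq_bot]
    exact Submodule.finrank_eq_zero.mp hker0
  -- top and bottom matrices
  set T : Matrix (Fin m ⊕ Fin (n - 1)) E F :=
    Matrix.of (fun r e => tcol F m n (↑e) r) with hTdef
  set Bm : Matrix (Fin h) E F := Matrix.of (fun k e => c (↑e) k) with hBdef
  have hTB : ∀ x : E → F, T.mulVec x = 0 → Bm.mulVec x = 0 → A.mulVec x = 0 := by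
    intro x ht hb
    funext r
    match r with
    | Sum.inl i => exact congrFun ht (Sum.inl i)
    | Sum.inr (Sum.inl j) => exact congrFun ht (Sum.inr j)
    | Sum.inr (Sum.inr kk) => exact congrFun hb kk
  -- finrank of ker of T is at most h
  have hkerT : Module.finrank F (LinearMap.ker T.mulVecLin) ≤ h := by
    have hinj2 : Function.Injective
        (Bm.mulVecLin.domRestrict (LinearMap.ker T.mulVecLin)) := by
      rw [← LinearMap.ker_eq_bot, LinearMap.ker_eq_bot']
      intro z hz
      have hz1 : T.mulVec ↑z = 0 := z.2
      have hz2 : Bm.mulVec ↑z = 0 := hz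
      have h0 : A.mulVecLin ↑z = A.mulVecLin 0 := by
        rw [map_zero]; exact hTB ↑z hz1 hz2
      have := hinj h0
      exact Subtype.ext this
    have := LinearMap.finrank_le_finrank_of_injective hinj2
    rwa [Module.finrank_fintype_fun_eq_card, Fintype.card_fin] at this
  have hrnT := LinearMap.finrank_range_add_finrank_ker T.mulVecLin
  rw [Module.finrank_fintype_fun_eq_card, Fintype.card_coe] at hrnT
  -- choose a linearly independent spanning subset of top columns
  obtain ⟨b, hbS, hspan, hli⟩ := exists_linearIndependent F (Set.range T.transpose)
  set E' := E.filter (fun e => tcol F m n e ∈ b) with hE'def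
  refine ⟨E', Finset.filter_subset _ _, ?_, ?_⟩
  · -- cardinality bound
    have hbsub : b ⊆ ↑(E'.image (tcol F m n)) := by
      intro v hv
      obtain ⟨e, he⟩ := hbS hv
      have heE' : (↑e : Fin m × Fin n) ∈ E' := by
        refine Finset.mem_filter.mpr ⟨e.2, ?_⟩
        have : tcol F m n ↑e = v := he
        rw [this]; exact hv
      refine Finset.mem_coe.mpr (Finset.mem_image.mpr ⟨↑e, heE', he⟩)
    have hcard : Module.finrank F (LinearMap.range T.mulVecLin) ≤ E'.card :=
      calc Module.finrank F (LinearMap.range T.mulVecLin)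
          = Module.finrank F (Submodule.span F (Set.range T.transpose)) := by
            rw [Matrix.range_mulVecLin]
            rfl
        _ = Module.finrank F (Submodule.span F b) := by rw [hspan]
        _ ≤ Module.finrank F (Submodule.span F ↑(E'.image (tcol F m n))) :=
            Submodule.finrank_mono (Submodule.span_mono hbsub)
        _ ≤ (E'.image (tcol F m n)).card := finrank_span_finset_le_card _
        _ ≤ E'.card := Finset.card_image_le
    omega
  · -- acyclicity
    have hliE' : LinearIndependent F (fun e : E' => tcol F m n ↑e) := by
      have hmap : ∀ e : E', tcol F m n ↑e ∈ b := fun e => (Finset.mem_filter.mp e.2).2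
      have hginj : Function.Injective
          (fun e : E' => (⟨tcol F m n ↑e, hmap e⟩ : b)) := by
        intro x y hxy
        exact Subtype.ext (tcol_injective F m n (congrArg Subtype.val hxy))
      exact hli.comp _ hginj
    intro C hC hcyc
    obtain ⟨k, hk2, I, J, hI, hJ, hCeq⟩ := hcyc
    have hk0 : 0 < k := by omega
    have hPC : ∀ ℓ, ℓ < k → (I ℓ, J ℓ) ∈ C := by
      intro ℓ hℓ
      rw [hCeq]
      exact Finset.mem_union_left _ (Finset.mem_image.mpr ⟨ℓ, Finset.mem_range.mpr hℓ, rfl⟩)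
    have hQC : ∀ ℓ, ℓ < k → (I ((ℓ + 1) % k), J ℓ) ∈ C := by
      intro ℓ hℓ
      rw [hCeq]
      exact Finset.mem_union_right _ (Finset.mem_image.mpr ⟨ℓ, Finset.mem_range.mpr hℓ, rfl⟩)
    have hPmem : ∀ ℓ, ℓ < k → (I ℓ, J ℓ) ∈ E' := fun ℓ hℓ => hC (hPC ℓ hℓ)
    have hQmem : ∀ ℓ, ℓ < k → (I ((ℓ + 1) % k), J ℓ) ∈ E' := fun ℓ hℓ => hC (hQC ℓ hℓ)
    have hPQ : ∀ ℓ ℓ', ℓ < k → ℓ' < k → (I ℓ, J ℓ) ≠ (I ((ℓ' + 1) % k), J ℓ') := by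
      intro ℓ ℓ' hℓ hℓ' heq
      have hJeq : J ℓ = J ℓ' := congrArg Prod.snd heq
      have hll : ℓ = ℓ' := hJ hℓ hℓ' hJeq
      subst hll
      have hIeq : I ℓ = I ((ℓ + 1) % k) := congrArg Prod.fst heq
      have h2 : ℓ = (ℓ + 1) % k := hI hℓ (Nat.mod_lt _ hk0) hIeq
      rcases Nat.lt_or_ge (ℓ + 1) k with hlt | hge
      · rw [Nat.mod_eq_of_lt hlt] at h2; omega
      · have hk1 : ℓ + 1 = k := by omega
        rw [hk1, Nat.mod_self] at h2
        omega
    -- build the dependency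
    rw [linearIndependent_iff'] at hliE'
    set eP : ℕ → Fin m × Fin n := fun ℓ => (I ℓ, J ℓ) with hePdef
    set eQ : ℕ → Fin m × Fin n := fun ℓ => (I ((ℓ + 1) % k), J ℓ) with heQdef
    set sP : Finset E' :=
      (Finset.range k).attach.image
        (fun ℓ => (⟨eP ℓ.1, hPmem ℓ.1 (Finset.mem_range.mp ℓ.2)⟩ : E')) with hsPdef
    set sQ : Finset E' :=
      (Finset.range k).attach.image
        (fun ℓ => (⟨eQ ℓ.1, hQmem ℓ.1 (Finset.mem_range.mp ℓ.2)⟩ : E')) with hsQdef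
    have hdisj : Disjoint sP sQ := by
      rw [Finset.disjoint_left]
      rintro e heP heQ
      obtain ⟨ℓ, -, hℓe⟩ := Finset.mem_image.mp heP
      obtain ⟨ℓ', -, hℓ'e⟩ := Finset.mem_image.mp heQ
      have h1 : eP ℓ.1 = (e : Fin m × Fin n) := congrArg Subtype.val hℓe
      have h2 : eQ ℓ'.1 = (e : Fin m × Fin n) := congrArg Subtype.val hℓ'e
      exact hPQ ℓ.1 ℓ'.1 (Finset.mem_range.mp ℓ.2) (Finset.mem_range.mp ℓ'.2)
        (h1.trans h2.symm)
    set g : E' → F := fun e =>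
      if ∃ ℓ, ℓ < k ∧ (e : Fin m × Fin n) = eP ℓ then 1 else -1 with hgdef
    have hePinj : ∀ a₁ ∈ (Finset.range k).attach, ∀ a₂ ∈ (Finset.range k).attach,
        (⟨eP a₁.1, hPmem a₁.1 (Finset.mem_range.mp a₁.2)⟩ : E') =
        (⟨eP a₂.1, hPmem a₂.1 (Finset.mem_range.mp a₂.2)⟩ : E') → a₁ = a₂ := by
      intro a₁ _ a₂ _ hval
      have : eP a₁.1 = eP a₂.1 := congrArg Subtype.val hval
      have hJeq : J a₁.1 = J a₂.1 := congrArg Prod.snd this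
      exact Subtype.ext (hJ (Finset.mem_range.mp a₁.2) (Finset.mem_range.mp a₂.2) hJeq)
    have heQinj : ∀ a₁ ∈ (Finset.range k).attach, ∀ a₂ ∈ (Finset.range k).attach,
        (⟨eQ a₁.1, hQmem a₁.1 (Finset.mem_range.mp a₁.2)⟩ : E') =
        (⟨eQ a₂.1, hQmem a₂.1 (Finset.mem_range.mp a₂.2)⟩ : E') → a₁ = a₂ := by
      intro a₁ _ a₂ _ hval
      have : eQ a₁.1 = eQ a₂.1 := congrArg Subtype.val hval
      have hJeq : J a₁.1 = J a₂.1 := congrArg Prod.snd this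
      exact Subtype.ext (hJ (Finset.mem_range.mp a₁.2) (Finset.mem_range.mp a₂.2) hJeq)
    have hsum : ∑ e ∈ sP ∪ sQ, g e • tcol F m n ↑e = 0 := by
      rw [Finset.sum_union hdisj]
      have h1 : ∑ e ∈ sP, g e • tcol F m n ↑e
          = ∑ ℓ ∈ Finset.range k, tcol F m n (eP ℓ) := by
        rw [hsPdef, Finset.sum_image hePinj]
        rw [← Finset.sum_attach (Finset.range k) (fun ℓ => tcol F m n (eP ℓ))]
        refine Finset.sum_congr rfl ?_
        intro a _
        have hg1 : g ⟨eP a.1, hPmem a.1 (Finset.mem_range.mp a.2)⟩ = 1 := by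
          rw [hgdef]
          exact if_pos ⟨a.1, Finset.mem_range.mp a.2, rfl⟩
        rw [hg1, one_smul]
      have h2 : ∑ e ∈ sQ, g e • tcol F m n ↑e
          = ∑ ℓ ∈ Finset.range k, -(tcol F m n (eQ ℓ)) := by
        rw [hsQdef, Finset.sum_image heQinj]
        rw [← Finset.sum_attach (Finset.range k) (fun ℓ => -(tcol F m n (eQ ℓ)))]
        refine Finset.sum_congr rfl ?_
        intro a _
        have hg1 : g ⟨eQ a.1, hQmem a.1 (Finset.mem_range.mp a.2)⟩ = -1 := by
          rw [hgdef]
          refine if_neg ?_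
          rintro ⟨ℓ, hℓ, heq⟩
          exact hPQ ℓ a.1 hℓ (Finset.mem_range.mp a.2) heq.symm
        rw [hg1, neg_one_smul]
      rw [h1, h2, ← Finset.sum_add_distrib]
      have := tcol_cycle_sum F m n k hk0 I J
      simpa [sub_eq_add_neg] using this
    have hmem0 : (⟨eP 0, hPmem 0 hk0⟩ : E') ∈ sP ∪ sQ := by
      refine Finset.mem_union_left _ (Finset.mem_image.mpr
        ⟨⟨0, Finset.mem_range.mpr hk0⟩, Finset.mem_attach _ _, rfl⟩)
    have h0 := hliE' (sP ∪ sQ) g hsum _ hmem0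
    have hone : g ⟨eP 0, hPmem 0 hk0⟩ = 1 := if_pos ⟨0, hk0, rfl⟩
    rw [hone] at h0
    exact one_ne_zero h0
end

section
/- Let h ≥ 2 and let q be a prime power. Suppose A_1, …, A_h ⊆ F_q^h are sets of nonzero vectors that are projectively distinct (any two distinct vectors in A_1 ∪ ⋯ ∪ A_h are linearly independent over F_q; in particular, as sets of projective points the A_ℓ are pairwise disjoint), each of size at least N. If there is no choice of vectors a_1 ∈ A_1, …, a_h ∈ A_h that is linearly dependent over F_q, then q ≥ N/(h−1) − 4. -/
open Finset

section AuxStatement17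

variable {F : Type*} [Field F] {h : ℕ}

private def dotL (v : Fin h → F) : (Fin h → F) →ₗ[F] F where
  toFun w := ∑ i, w i * v i
  map_add' w w' := by simp [add_mul, Finset.sum_add_distrib]
  map_smul' c w := by simp [Finset.mul_sum, mul_assoc]

private lemma dotL_apply (v w : Fin h → F) : dotL v w = ∑ i, w i * v i := rfl

private lemma dotL_single (v : Fin h → F) (i : Fin h) (c : F) :
    dotL v (Pi.single i c) = c * v i := by
  classical
  rw [dotL_apply, Finset.sum_eq_single i]
  · simp
  · intro j _ hj; simp [Pi.single_apply, hj]
  · simp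

private lemma dotL_comm (v w : Fin h → F) : dotL v w = dotL w v := by
  rw [dotL_apply, dotL_apply]
  exact Finset.sum_congr rfl fun i _ => mul_comm _ _

private lemma dotL_surj {v : Fin h → F} (hv : v ≠ 0) :
    LinearMap.range (dotL v) = ⊤ := by
  classical
  obtain ⟨i, hi⟩ : ∃ i, v i ≠ 0 := by
    by_contra hc
    push_neg at hc
    exact hv (funext fun i => hc i)
  rw [LinearMap.range_eq_top]
  intro c
  refine ⟨Pi.single i (c * (v i)⁻¹), ?_⟩
  rw [dotL_single]
  field_simp

private lemma card_ker_dot [Fintype F] {v : Fin h → F} (hv : v ≠ 0) :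
    Nat.card {w : Fin h → F // dotL v w = 0} = Fintype.card F ^ (h - 1) := by
  classical
  have hcongr : Nat.card {w : Fin h → F // dotL v w = 0}
      = Nat.card (LinearMap.ker (dotL v)) :=
    Nat.card_congr (Equiv.subtypeEquivRight fun w => (LinearMap.mem_ker).symm)
  rw [hcongr, Nat.card_eq_fintype_card, Module.card_eq_pow_finrank (K := F)]
  congr 1
  have h1 := LinearMap.finrank_range_add_finrank_ker (dotL v)
  rw [dotL_surj hv, finrank_top, Module.finrank_self, Module.finrank_fin_fun] at h1
  omega

private lemma exists_dot_eq {u v : Fin h → F} (huv : LinearIndependent F ![u, v]) :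
    ∃ w, dotL u w = 0 ∧ dotL v w = 1 := by
  classical
  by_cases hker : ∃ w, dotL u w = 0 ∧ dotL v w ≠ 0
  · obtain ⟨w, hw0, hw1⟩ := hker
    refine ⟨(dotL v w)⁻¹ • w, ?_, ?_⟩
    · rw [map_smul, hw0, smul_zero]
    · rw [map_smul, smul_eq_mul, inv_mul_cancel₀ hw1]
  · exfalso
    push_neg at hker
    have hu0 : u ≠ 0 := by
      have := huv.ne_zero 0
      simpa using this
    obtain ⟨i, hi⟩ : ∃ i, u i ≠ 0 := by
      by_contra hc; push_neg at hc; exact hu0 (funext fun i => hc i)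
    set w₀ : Fin h → F := Pi.single i (u i)⁻¹ with hw₀def
    have hw₀u : dotL u w₀ = 1 := by
      rw [hw₀def, dotL_single, inv_mul_cancel₀ hi]
    set c := dotL v w₀ with hcdef
    have hprop : ∀ w, dotL v w = c * dotL u w := by
      intro w
      have h0 : dotL u (w - dotL u w • w₀) = 0 := by
        rw [map_sub, map_smul, hw₀u, smul_eq_mul, mul_one, sub_self]
      have h1 := hker _ h0
      rw [map_sub, map_smul, smul_eq_mul, sub_eq_zero] at h1
      rw [h1, ← hcdef]; ring
    have hvc : v = c • u := by
      funext j
      have hj := hprop (Pi.single j 1)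
      rw [dotL_single, dotL_single, one_mul, one_mul] at hj
      simpa using hj
    rw [linearIndependent_fin2] at huv
    obtain ⟨hv0, hne⟩ := huv
    simp only [Matrix.cons_val_one, Matrix.head_cons, Matrix.cons_val_zero] at hv0 hne
    by_cases hc0 : c = 0
    · exact hv0 (by rw [hvc, hc0, zero_smul])
    · exact hne c⁻¹ (by rw [hvc, smul_smul, inv_mul_cancel₀ hc0, one_smul])

private lemma pair_symm {u v : Fin h → F} (huv : LinearIndependent F ![u, v]) :
    LinearIndependent F ![v, u] := by
  have hu0 : u ≠ 0 := by simpa using huv.ne_zero 0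
  rw [linearIndependent_fin2] at huv ⊢
  simp only [Matrix.cons_val_one, Matrix.head_cons, Matrix.cons_val_zero] at *
  obtain ⟨hv0, hne⟩ := huv
  refine ⟨hu0, fun a ha => ?_⟩
  by_cases ha0 : a = 0
  · exact hv0 (by rw [← ha, ha0, zero_smul])
  · exact hne a⁻¹ (by rw [← ha, smul_smul, inv_mul_cancel₀ ha0, one_smul])

private lemma card_ker_dot2 [Fintype F] {u v : Fin h → F}
    (huv : LinearIndependent F ![u, v]) :
    Nat.card {w : Fin h → F // dotL u w = 0 ∧ dotL v w = 0}
      = Fintype.card F ^ (h - 2) := by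
  classical
  set Φ : (Fin h → F) →ₗ[F] F × F := (dotL u).prod (dotL v) with hΦ
  have hmem : ∀ w, (dotL u w = 0 ∧ dotL v w = 0) ↔ Φ w = 0 := by
    intro w
    rw [hΦ, LinearMap.prod_apply]
    constructor
    · rintro ⟨h1, h2⟩; rw [Function.prod, h1, h2]; rfl
    · intro h12
      have := Prod.ext_iff.mp h12
      exact ⟨this.1, this.2⟩
  have hcongr : Nat.card {w : Fin h → F // dotL u w = 0 ∧ dotL v w = 0}
      = Nat.card (LinearMap.ker Φ) :=
    Nat.card_congr (Equiv.subtypeEquivRight fun w => by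
      rw [LinearMap.mem_ker, hmem w])
  have hsurj : LinearMap.range Φ = ⊤ := by
    rw [eq_top_iff]
    rintro ⟨s, t⟩ -
    obtain ⟨w1, hw1u, hw1v⟩ := exists_dot_eq huv
    obtain ⟨w2, hw2v, hw2u⟩ := exists_dot_eq (pair_symm huv)
    refine ⟨s • w2 + t • w1, ?_⟩
    rw [hΦ, LinearMap.prod_apply]
    have e1 : dotL u (s • w2 + t • w1) = s := by
      rw [map_add, map_smul, map_smul, hw1u, hw2u, smul_eq_mul, smul_eq_mul]
      ring
    have e2 : dotL v (s • w2 + t • w1) = t := by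
      rw [map_add, map_smul, map_smul, hw1v, hw2v, smul_eq_mul, smul_eq_mul]
      ring
    rw [Function.prod, e1, e2]
  have h1 := LinearMap.finrank_range_add_finrank_ker Φ
  rw [hsurj, finrank_top, Module.finrank_prod, Module.finrank_self,
    Module.finrank_fin_fun] at h1
  rw [hcongr, Nat.card_eq_fintype_card, Module.card_eq_pow_finrank (K := F)]
  congr 1
  omega

end AuxStatement17

set_option maxHeartbeats 1000000 in
/-- Lemma 3.1 of Gopi et al..  Let `h ≥ 2` and let
`A 0, …, A (h-1) ⊆ F_q^h` be sets of nonzero, pairwise projectively distinct vectors,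
each of size at least `N`.  If every transversal `a 0 ∈ A 0, …, a (h-1) ∈ A (h-1)` is
linearly independent over `F_q`, then `q ≥ N / (h - 1) - 4`. -/
theorem statement17 (h N : ℕ) (hh : 2 ≤ h)
    (F : Type*) [Field F] [Fintype F]
    (A : Fin h → Finset (Fin h → F))
    (hnz : ∀ ℓ, ∀ v ∈ A ℓ, v ≠ 0)
    (hproj : ∀ ℓ ℓ' : Fin h, ∀ u ∈ A ℓ, ∀ v ∈ A ℓ', u ≠ v → LinearIndependent F ![u, v])
    (hsize : ∀ ℓ, N ≤ (A ℓ).card)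
    (hindep : ∀ a : Fin h → Fin h → F, (∀ ℓ, a ℓ ∈ A ℓ) → LinearIndependent F a) :
    (N : ℝ) / ((h : ℝ) - 1) - 4 ≤ (Fintype.card F : ℝ) := by
  classical
  set q := Fintype.card F with hqdef
  have hq2 : 2 ≤ q := Fintype.one_lt_card
  have hhR : (2:ℝ) ≤ (h:ℝ) := by exact_mod_cast hh
  have hh1 : (0:ℝ) < (h:ℝ) - 1 := by linarith
  rcases Nat.eq_zero_or_pos N with hN0 | hNpos
  · subst hN0
    have hq0 : (0:ℝ) ≤ (q:ℝ) := by positivity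
    simp only [Nat.cast_zero, zero_div]
    linarith
  -- trim the sets to exactly N elements
  choose B hBsub hBcard using fun ℓ => Finset.exists_subset_card_eq (hsize ℓ)
  set W : Finset (Fin h → F) := univ.filter (fun w => w ≠ 0) with hWdef
  have hWmem : ∀ w : Fin h → F, w ∈ W ↔ w ≠ 0 := by intro w; simp [hWdef]
  have hcardW : W.card = q ^ h - 1 := by
    rw [hWdef, filter_ne', card_erase_of_mem (mem_univ _), card_univ]
    congr 1
    rw [Fintype.card_fun, Fintype.card_fin]
  have key1 : ∀ v : Fin h → F, v ≠ 0 →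
      (W.filter (fun w => dotL v w = 0)).card = q ^ (h-1) - 1 := by
    intro v hv
    have hset : W.filter (fun w => dotL v w = 0)
        = (univ.filter (fun w => dotL v w = 0)).erase 0 := by
      ext w
      simp only [hWdef, mem_filter, mem_erase, mem_univ, true_and, filter_filter] <;> tauto
    rw [hset, card_erase_of_mem (by simp), ← Fintype.card_subtype,
      ← Nat.card_eq_fintype_card, card_ker_dot hv]
  have key2 : ∀ u v : Fin h → F, LinearIndependent F ![u, v] →
      (W.filter (fun w => dotL u w = 0 ∧ dotL v w = 0)).card = q ^ (h-2) - 1 := by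
    intro u v huv
    have hset : W.filter (fun w => dotL u w = 0 ∧ dotL v w = 0)
        = (univ.filter (fun w => dotL u w = 0 ∧ dotL v w = 0)).erase 0 := by
      ext w
      simp only [hWdef, mem_filter, mem_erase, mem_univ, true_and, filter_filter] <;> tauto
    rw [hset, card_erase_of_mem (by simp), ← Fintype.card_subtype,
      ← Nat.card_eq_fintype_card, card_ker_dot2 huv]
  set x : Fin h → (Fin h → F) → ℕ :=
    fun ℓ w => ((B ℓ).filter (fun v => dotL v w = 0)).card with hxdef
  have I1 : ∀ ℓ, ∑ w ∈ W, x ℓ w = N * (q ^ (h-1) - 1) := by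
    intro ℓ
    calc ∑ w ∈ W, x ℓ w
        = ∑ w ∈ W, ∑ v ∈ B ℓ, (if dotL v w = 0 then 1 else 0) :=
          Finset.sum_congr rfl fun w _ => Finset.card_filter _ _
      _ = ∑ v ∈ B ℓ, ∑ w ∈ W, (if dotL v w = 0 then 1 else 0) := Finset.sum_comm
      _ = ∑ v ∈ B ℓ, (q ^ (h-1) - 1) := by
          refine Finset.sum_congr rfl fun v hv => ?_
          rw [← Finset.card_filter]
          exact key1 v (hnz ℓ v (hBsub ℓ hv))
      _ = N * (q ^ (h-1) - 1) := by rw [Finset.sum_const, hBcard ℓ, smul_eq_mul]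
  have I2 : ∀ ℓ, ∑ w ∈ W, (x ℓ w)^2
      = N * (q ^ (h-1) - 1) + N * (N-1) * (q ^ (h-2) - 1) := by
    intro ℓ
    have expand : ∀ w : Fin h → F, (x ℓ w)^2
        = ∑ u ∈ B ℓ, ∑ v ∈ B ℓ, (if dotL u w = 0 ∧ dotL v w = 0 then 1 else 0) := by
      intro w
      show (((B ℓ).filter (fun v => dotL v w = 0)).card)^2 = _
      rw [sq, Finset.card_filter, Finset.sum_mul_sum]
      refine Finset.sum_congr rfl fun u _ => Finset.sum_congr rfl fun v _ => ?_
      by_cases h1 : dotL u w = 0 <;> by_cases h2 : dotL v w = 0 <;> simp [h1, h2]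
    calc ∑ w ∈ W, (x ℓ w)^2
        = ∑ w ∈ W, ∑ u ∈ B ℓ, ∑ v ∈ B ℓ, (if dotL u w = 0 ∧ dotL v w = 0 then 1 else 0) :=
          Finset.sum_congr rfl fun w _ => expand w
      _ = ∑ u ∈ B ℓ, ∑ w ∈ W, ∑ v ∈ B ℓ, (if dotL u w = 0 ∧ dotL v w = 0 then 1 else 0) :=
          Finset.sum_comm
      _ = ∑ u ∈ B ℓ, ∑ v ∈ B ℓ, ∑ w ∈ W, (if dotL u w = 0 ∧ dotL v w = 0 then 1 else 0) :=
          Finset.sum_congr rfl fun u _ => Finset.sum_comm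
      _ = ∑ u ∈ B ℓ, ((q ^ (h-1) - 1) + (N-1) * (q ^ (h-2) - 1)) := by
          refine Finset.sum_congr rfl fun u hu => ?_
          rw [← Finset.add_sum_erase _ _ hu]
          congr 1
          · simp only [and_self]
            rw [← Finset.card_filter]
            exact key1 u (hnz ℓ u (hBsub ℓ hu))
          · calc ∑ v ∈ (B ℓ).erase u, ∑ w ∈ W, (if dotL u w = 0 ∧ dotL v w = 0 then 1 else 0)
                = ∑ v ∈ (B ℓ).erase u, (q ^ (h-2) - 1) := by
                  refine Finset.sum_congr rfl fun v hv => ?_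
                  rw [← Finset.card_filter]
                  exact key2 u v (hproj ℓ ℓ u (hBsub ℓ hu) v
                    (hBsub ℓ (Finset.mem_of_mem_erase hv))
                    (Ne.symm (Finset.ne_of_mem_erase hv)))
              _ = (N-1) * (q ^ (h-2) - 1) := by
                  rw [Finset.sum_const, Finset.card_erase_of_mem hu, hBcard ℓ, smul_eq_mul]
      _ = N * (q ^ (h-1) - 1) + N * (N-1) * (q ^ (h-2) - 1) := by
          rw [Finset.sum_const, hBcard ℓ, smul_eq_mul, Nat.mul_add, mul_assoc]
  set m : Fin h → ℕ := fun ℓ => (W.filter (fun w => x ℓ w ≠ 0)).card with hmdef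
  have rainbow : ∀ w ∈ W, ∃ ℓ, x ℓ w = 0 := by
    intro w hw
    by_contra hc
    push_neg at hc
    have hne : ∀ ℓ, ((B ℓ).filter (fun v => dotL v w = 0)).Nonempty := by
      intro ℓ
      exact Finset.card_pos.mp (Nat.pos_of_ne_zero (hc ℓ))
    choose a ha using hne
    have hmem : ∀ ℓ, a ℓ ∈ A ℓ := fun ℓ => hBsub ℓ (Finset.mem_of_mem_filter _ (ha ℓ))
    have hdot : ∀ ℓ, dotL (a ℓ) w = 0 := fun ℓ => (Finset.mem_filter.mp (ha ℓ)).2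
    have hli := hindep a hmem
    haveI : Nonempty (Fin h) := ⟨⟨0, by omega⟩⟩
    have hspan : Submodule.span F (Set.range a) = ⊤ :=
      hli.span_eq_top_of_card_eq_finrank
        (by rw [Fintype.card_fin, Module.finrank_fin_fun])
    have hker : ∀ u : Fin h → F, dotL w u = 0 := by
      intro u
      have hu : u ∈ Submodule.span F (Set.range a) := by rw [hspan]; trivial
      induction hu using Submodule.span_induction with
      | mem y hy => obtain ⟨ℓ, rfl⟩ := hy; rw [dotL_comm]; exact hdot ℓ
      | zero => simp
      | add y z _ _ hy hz => rw [map_add, hy, hz, add_zero]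
      | smul c y _ hy => rw [map_smul, hy, smul_zero]
    have hw0 : w = 0 := by
      funext i
      have hi := hker (Pi.single i 1)
      rw [dotL_single, one_mul] at hi
      simpa using hi
    exact ((hWmem w).mp hw) hw0
  have I3 : ∑ ℓ, m ℓ ≤ (h - 1) * (q ^ h - 1) := by
    have hswap : ∑ ℓ, m ℓ = ∑ w ∈ W, (univ.filter (fun ℓ => x ℓ w ≠ 0)).card := by
      simp only [hmdef, Finset.card_filter]
      exact Finset.sum_comm
    rw [hswap]
    have hbound : ∀ w ∈ W, (univ.filter (fun ℓ => x ℓ w ≠ 0)).card ≤ h - 1 := by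
      intro w hw
      obtain ⟨ℓ₀, hℓ₀⟩ := rainbow w hw
      have hsub : univ.filter (fun ℓ => x ℓ w ≠ 0) ⊆ univ.erase ℓ₀ := by
        intro ℓ hℓ
        rw [Finset.mem_filter] at hℓ
        exact Finset.mem_erase.mpr ⟨fun he => hℓ.2 (he ▸ hℓ₀), Finset.mem_univ _⟩
      calc (univ.filter (fun ℓ => x ℓ w ≠ 0)).card ≤ (univ.erase ℓ₀).card :=
            Finset.card_le_card hsub
        _ = h - 1 := by
            rw [Finset.card_erase_of_mem (Finset.mem_univ _), Finset.card_univ,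
              Fintype.card_fin]
    calc ∑ w ∈ W, (univ.filter (fun ℓ => x ℓ w ≠ 0)).card ≤ ∑ w ∈ W, (h-1) :=
          Finset.sum_le_sum hbound
      _ = (h-1) * (q^h - 1) := by rw [Finset.sum_const, hcardW, smul_eq_mul, Nat.mul_comm]
  -- Cauchy-Schwarz for each colour
  have CS : ∀ ℓ : Fin h, ((N * (q ^ (h-1) - 1) : ℕ) : ℝ)^2
      ≤ (m ℓ : ℝ) * ((N * (q ^ (h-1) - 1) + N * (N-1) * (q ^ (h-2) - 1) : ℕ) : ℝ) := by
    intro ℓ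
    have hsum1 : ∑ w ∈ W.filter (fun w => x ℓ w ≠ 0), (x ℓ w : ℝ)
        = ((N * (q ^ (h-1) - 1) : ℕ) : ℝ) := by
      have hfil : ∑ w ∈ W.filter (fun w => x ℓ w ≠ 0), (x ℓ w : ℝ)
          = ∑ w ∈ W, (x ℓ w : ℝ) :=
        Finset.sum_filter_of_ne (fun w _ hne => by exact_mod_cast hne)
      rw [hfil, ← Nat.cast_sum, I1 ℓ]
    have hsum2 : ∑ w ∈ W.filter (fun w => x ℓ w ≠ 0), ((x ℓ w : ℝ))^2
        ≤ ((N * (q ^ (h-1) - 1) + N * (N-1) * (q ^ (h-2) - 1) : ℕ) : ℝ) := by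
      calc ∑ w ∈ W.filter (fun w => x ℓ w ≠ 0), ((x ℓ w : ℝ))^2
          ≤ ∑ w ∈ W, ((x ℓ w : ℝ))^2 :=
            Finset.sum_le_sum_of_subset_of_nonneg (Finset.filter_subset _ _)
              (fun w _ _ => by positivity)
        _ = ((∑ w ∈ W, (x ℓ w)^2 : ℕ) : ℝ) := by
            rw [Nat.cast_sum]
            exact Finset.sum_congr rfl fun w _ => by push_cast; ring
        _ = _ := by rw [I2 ℓ]
    have hCS := sq_sum_le_card_mul_sum_sq (s := W.filter (fun w => x ℓ w ≠ 0))
      (f := fun w => (x ℓ w : ℝ))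
    rw [hsum1] at hCS
    calc ((N * (q ^ (h-1) - 1) : ℕ) : ℝ)^2
        ≤ ((W.filter (fun w => x ℓ w ≠ 0)).card : ℝ)
            * ∑ w ∈ W.filter (fun w => x ℓ w ≠ 0), ((x ℓ w : ℝ))^2 := hCS
      _ ≤ (m ℓ : ℝ) * ((N * (q ^ (h-1) - 1) + N * (N-1) * (q ^ (h-2) - 1) : ℕ) : ℝ) := by
          rw [hmdef]
          exact mul_le_mul_of_nonneg_left hsum2 (by positivity)
  -- sum the Cauchy–Schwarz inequalities
  have sumCS : (h:ℝ) * ((N * (q ^ (h-1) - 1) : ℕ) : ℝ)^2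
      ≤ (((h-1) * (q^h - 1) : ℕ) : ℝ)
        * ((N * (q ^ (h-1) - 1) + N * (N-1) * (q ^ (h-2) - 1) : ℕ) : ℝ) := by
    have h1 := Finset.sum_le_sum (fun ℓ (_ : ℓ ∈ (univ : Finset (Fin h))) => CS ℓ)
    rw [Finset.sum_const, Finset.card_univ, Fintype.card_fin, nsmul_eq_mul] at h1
    have h2 : ∑ ℓ : Fin h, (m ℓ : ℝ)
          * ((N * (q ^ (h-1) - 1) + N * (N-1) * (q ^ (h-2) - 1) : ℕ) : ℝ)
        = ((∑ ℓ, m ℓ : ℕ) : ℝ)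
          * ((N * (q ^ (h-1) - 1) + N * (N-1) * (q ^ (h-2) - 1) : ℕ) : ℝ) := by
      rw [← Finset.sum_mul, Nat.cast_sum]
    rw [h2] at h1
    refine h1.trans (mul_le_mul_of_nonneg_right ?_ (by positivity))
    exact_mod_cast I3
  -- final arithmetic over ℝ
  obtain ⟨P, hPdef, hP1, hexp1, hexp2⟩ : ∃ P : ℝ, P = ((q:ℝ))^(h-2) ∧ 1 ≤ P
      ∧ ((q:ℝ))^(h-1) = P * (q:ℝ) ∧ ((q:ℝ))^h = P * (q:ℝ)^2 := by
    refine ⟨(q:ℝ)^(h-2), rfl, one_le_pow₀ (by exact_mod_cast Nat.one_le_of_lt hq2), ?_, ?_⟩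
    · rw [← pow_succ]; congr 1; omega
    · rw [← pow_add]; congr 1; omega
  have hqR : (2:ℝ) ≤ (q:ℝ) := by exact_mod_cast hq2
  have hNR : (1:ℝ) ≤ (N:ℝ) := by exact_mod_cast hNpos
  have hc1 : (1:ℕ) ≤ q ^ (h-1) := Nat.one_le_pow _ _ (by omega)
  have hc2 : (1:ℕ) ≤ q ^ (h-2) := Nat.one_le_pow _ _ (by omega)
  have hc3 : (1:ℕ) ≤ q ^ h := Nat.one_le_pow _ _ (by omega)
  have hch : (1:ℕ) ≤ h := by omega
  have hαR : ((N * (q ^ (h-1) - 1) : ℕ) : ℝ) = (N:ℝ) * (P * (q:ℝ) - 1) := by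
    push_cast [Nat.cast_sub hc1]
    rw [hexp1]
  have hβR : ((N * (q ^ (h-1) - 1) + N * (N-1) * (q ^ (h-2) - 1) : ℕ) : ℝ)
      = (N:ℝ) * (P * (q:ℝ) - 1) + (N:ℝ) * ((N:ℝ) - 1) * (P - 1) := by
    push_cast [Nat.cast_sub hc1, Nat.cast_sub hc2, Nat.cast_sub hNpos]
    rw [hexp1, ← hPdef]
  have htR : (((h-1) * (q^h - 1) : ℕ) : ℝ) = ((h:ℝ) - 1) * (P * (q:ℝ)^2 - 1) := by
    push_cast [Nat.cast_sub hc3, Nat.cast_sub hch]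
    rw [hexp2]
  rw [hαR, hβR, htR] at sumCS
  -- now pure real arithmetic
  have hApos : (0:ℝ) < P * (q:ℝ) - 1 := by nlinarith
  have W2 : (h:ℝ) * (N:ℝ) * (P*(q:ℝ)-1)^2
      ≤ ((h:ℝ)-1) * (P*(q:ℝ)^2-1) * ((P*(q:ℝ)-1) + ((N:ℝ)-1)*(P-1)) := by
    have hNpos' : (0:ℝ) < (N:ℝ) := by linarith
    have hmul : (N:ℝ) * ((h:ℝ) * (N:ℝ) * (P*(q:ℝ)-1)^2)
        ≤ (N:ℝ) * (((h:ℝ)-1) * (P*(q:ℝ)^2-1) * ((P*(q:ℝ)-1) + ((N:ℝ)-1)*(P-1))) := by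
      calc (N:ℝ) * ((h:ℝ) * (N:ℝ) * (P*(q:ℝ)-1)^2)
          = (h:ℝ) * ((N:ℝ) * (P * (q:ℝ) - 1))^2 := by ring
        _ ≤ ((h:ℝ) - 1) * (P * (q:ℝ)^2 - 1)
            * ((N:ℝ) * (P * (q:ℝ) - 1) + (N:ℝ) * ((N:ℝ) - 1) * (P - 1)) := sumCS
        _ = (N:ℝ) * (((h:ℝ)-1) * (P*(q:ℝ)^2-1)
            * ((P*(q:ℝ)-1) + ((N:ℝ)-1)*(P-1))) := by ring
    exact le_of_mul_le_mul_left hmul hNpos'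
  have e3 : ((h:ℝ)-1) * (P*(q:ℝ)^2-1) * ((P*(q:ℝ)-1) + ((N:ℝ)-1)*(P-1))
      = ((h:ℝ)-1) * (P*(q:ℝ)^2-1) * (P*(q:ℝ)-1)
        + ((h:ℝ)-1) * ((N:ℝ)-1) * ((P*(q:ℝ)-1)^2 - P*((q:ℝ)-1)^2) := by ring
  have hnn : (0:ℝ) ≤ ((h:ℝ)-1) * ((N:ℝ)-1) * (P * ((q:ℝ)-1)^2) :=
    mul_nonneg (mul_nonneg (by linarith) (by linarith))
      (mul_nonneg (by linarith) (sq_nonneg _))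
  have W3 : (P*(q:ℝ)-1)^2 * ((N:ℝ) + (h:ℝ) - 1)
      ≤ ((h:ℝ)-1) * (P*(q:ℝ)^2-1) * (P*(q:ℝ)-1) := by
    rw [e3] at W2
    linarith [W2, hnn]
  have W4 : (P*(q:ℝ)-1) * ((N:ℝ) + (h:ℝ) - 1) ≤ ((h:ℝ)-1) * (P*(q:ℝ)^2-1) := by
    have hmul : (P*(q:ℝ)-1) * ((P*(q:ℝ)-1) * ((N:ℝ) + (h:ℝ) - 1))
        ≤ (P*(q:ℝ)-1) * (((h:ℝ)-1) * (P*(q:ℝ)^2-1)) := by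
      calc (P*(q:ℝ)-1) * ((P*(q:ℝ)-1) * ((N:ℝ) + (h:ℝ) - 1))
          = (P*(q:ℝ)-1)^2 * ((N:ℝ) + (h:ℝ) - 1) := by ring
        _ ≤ ((h:ℝ)-1) * (P*(q:ℝ)^2-1) * (P*(q:ℝ)-1) := W3
        _ = (P*(q:ℝ)-1) * (((h:ℝ)-1) * (P*(q:ℝ)^2-1)) := by ring
    exact le_of_mul_le_mul_left hmul hApos
  have W5 : (P*(q:ℝ)^2 - 1) ≤ (P*(q:ℝ) - 1) * ((q:ℝ)+1) := by nlinarith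
  have W6 : (N:ℝ) + (h:ℝ) - 1 ≤ ((h:ℝ)-1) * ((q:ℝ)+1) := by
    have hmul : (P*(q:ℝ)-1) * ((N:ℝ) + (h:ℝ) - 1)
        ≤ (P*(q:ℝ)-1) * (((h:ℝ)-1) * ((q:ℝ)+1)) := by
      calc (P*(q:ℝ)-1) * ((N:ℝ) + (h:ℝ) - 1) ≤ ((h:ℝ)-1) * (P*(q:ℝ)^2-1) := W4
        _ ≤ ((h:ℝ)-1) * ((P*(q:ℝ)-1) * ((q:ℝ)+1)) :=
            mul_le_mul_of_nonneg_left W5 (by linarith)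
        _ = (P*(q:ℝ)-1) * (((h:ℝ)-1) * ((q:ℝ)+1)) := by ring
    exact le_of_mul_le_mul_left hmul hApos
  have W7 : (N:ℝ) ≤ ((h:ℝ)-1) * (q:ℝ) := by nlinarith [W6]
  have hfinal : (N:ℝ) / ((h:ℝ)-1) ≤ (q:ℝ) := by
    rw [div_le_iff₀ hh1]
    nlinarith [W7]
  have hq0 : (0:ℝ) ≤ (q:ℝ) := by positivity
  linarith
end
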